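/- With Σ_p and E₀(p) as above, for every p ≥ 2 one has E₀(p) ≥ 2√((p−1)/p), with strict inequality for p ≥ 3. -/

import Mathlib

/-- The log-potential of the semicircle law on `[-2,2]`. -/
noncomputable def semicircleLogPotential (x : ℝ) : ℝ :=
  if |x| ≤ 2 then x ^ 2 / 4 - 1 / 2
  else x ^ 2 / 4 - 1 / 2 -
    (|x| / 4 * Real.sqrt (x ^ 2 - 4) - Real.log (Real.sqrt (x ^ 2 / 4 - 1) + |x| / 2))

/-- The function `Σ_p`. -/
noncomputable def SigmaP (p u : ℝ) : ℝ :=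
  (1 + Real.log (p - 1)) / 2 +
    semicircleLogPotential (u * Real.sqrt (p / (p - 1))) - u ^ 2 / 2

/-- For every `p ≥ 2`, `E₀(p) ≥ 2√((p-1)/p)`, with strict inequality for `p ≥ 3`.
Here `E₀(p)` is the unique positive zero of `Σ_p` for `p > 2`, with the convention
`E₀(2) = √2`. -/

lemma aux_log (t : ℝ) (ht : 1 < t) : 2 - 4 / (t + 1) < Real.log t := by
  have hmono : StrictMonoOn (fun x : ℝ => Real.log x + 4 / (x + 1)) (Set.Ici (1:ℝ)) := by
    apply strictMonoOn_of_deriv_pos (convex_Ici 1)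
    · apply ContinuousOn.add
      · exact Real.continuousOn_log.mono (fun x hx => by
          simp only [Set.mem_compl_iff, Set.mem_singleton_iff]
          have : (1:ℝ) ≤ x := hx
          intro h; rw [h] at this; linarith)
      · exact ContinuousOn.div continuousOn_const (by fun_prop)
          (fun x hx => by have : (1:ℝ) ≤ x := hx; intro h; linarith [h])
    · intro x hx
      rw [interior_Ici] at hx
      have hx1 : (1:ℝ) < x := hx
      have hx0 : x ≠ 0 := by linarith
      have hx1' : x + 1 ≠ 0 := by linarith
      have h1 : HasDerivAt Real.log x⁻¹ x := Real.hasDerivAt_log hx0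
      have h2 : HasDerivAt (fun y : ℝ => y + 1) 1 x := (hasDerivAt_id x).add_const 1
      have h3 : HasDerivAt (fun y : ℝ => (y + 1)⁻¹) (-1 / (x+1)^2) x := h2.inv hx1'
      have h4 : HasDerivAt (fun y : ℝ => 4 / (y + 1)) (4 * (-1 / (x+1)^2)) x := by
        simpa [div_eq_mul_inv] using h3.const_mul 4
      have hd : HasDerivAt (fun x : ℝ => Real.log x + 4 / (x + 1))
          (x⁻¹ + 4 * (-1 / (x+1)^2)) x := h1.add h4
      rw [hd.deriv]
      have heq : x⁻¹ + 4 * (-1 / (x+1)^2) = (x-1)^2 / (x*(x+1)^2) := by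
        field_simp; ring
      rw [heq]
      have hxm : (0:ℝ) < x - 1 := by linarith
      exact div_pos (pow_pos hxm 2) (by positivity)
  have h := hmono (Set.self_mem_Ici) (Set.mem_Ici.mpr ht.le) ht
  simp only [Real.log_one] at h
  norm_num at h
  linarith

theorem E0_ge_edge (p E : ℝ) (hp : 2 ≤ p)
    (hE : (p = 2 ∧ E = Real.sqrt 2) ∨ (2 < p ∧ 0 < E ∧ SigmaP p E = 0)) :
    2 * Real.sqrt ((p - 1) / p) ≤ E ∧ (3 ≤ p → 2 * Real.sqrt ((p - 1) / p) < E) := by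
  rcases hE with ⟨hp2, hE2⟩ | ⟨hp2, hEpos, hSig⟩
  · subst hp2; subst hE2
    have hpos : (0:ℝ) < Real.sqrt 2 := Real.sqrt_pos.mpr (by norm_num)
    have hms : Real.sqrt 2 * Real.sqrt 2 = 2 := Real.mul_self_sqrt (by norm_num)
    have heq : 2 * Real.sqrt (((2:ℝ) - 1) / 2) = Real.sqrt 2 := by
      rw [show ((2:ℝ) - 1)/2 = 2⁻¹ by norm_num, Real.sqrt_inv]
      field_simp
      rw [sq, hms]
    constructor
    · exact heq.le
    · intro h3; norm_num at h3
  · have hq : (0:ℝ) < p - 1 := by linarith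
    have hp0 : (0:ℝ) < p := by linarith
    set a := Real.sqrt ((p-1)/p) with ha
    set b := Real.sqrt (p/(p-1)) with hb
    have ha2 : a^2 = (p-1)/p := Real.sq_sqrt (by positivity)
    have hb2 : b^2 = p/(p-1) := Real.sq_sqrt (by positivity)
    have hb0 : 0 < b := Real.sqrt_pos.mpr (by positivity)
    have ha0 : 0 ≤ a := Real.sqrt_nonneg _
    have hab : a * b = 1 := by
      have h1 : (a*b)^2 = 1 := by rw [mul_pow, ha2, hb2]; field_simp
      nlinarith [mul_nonneg ha0 hb0.le]
    have key : 2 * a < E := by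
      by_contra hle
      push_neg at hle
      have hx : E * b ≤ 2 := by nlinarith
      have hxnn : 0 ≤ E * b := by positivity
      have habs : |E * b| ≤ 2 := abs_le.mpr ⟨by linarith, hx⟩
      have hpot : semicircleLogPotential (E * b) = (E*b)^2/4 - 1/2 := by
        unfold semicircleLogPotential; rw [if_pos habs]
      have hSig' := hSig
      unfold SigmaP at hSig'
      rw [← hb, hpot, mul_pow, hb2] at hSig'
      -- hSig' : (1 + log(p-1))/2 + (E^2*(p/(p-1))/4 - 1/2) - E^2/2 = 0
      have ha2p : a^2 * p = p - 1 := by rw [ha2]; field_simp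
      have hEa : E^2 ≤ 4 * a^2 := by
        nlinarith [mul_nonneg (sub_nonneg.mpr hle) (by positivity : (0:ℝ) ≤ 2*a + E)]
      have hE2le : E^2 * p ≤ 4 * (p-1) := by nlinarith
      have hlog := aux_log (p-1) (by linarith)
      have hlogp : Real.log (p-1) * p > 2*p - 4 := by
        have h4 : 4 / ((p-1)+1) = 4 / p := by ring_nf
        rw [h4] at hlog
        have := mul_lt_mul_of_pos_right hlog hp0
        rw [sub_mul, div_mul_cancel₀] at this
        · linarith
        · linarith
      set d := p / (p-1) with hdd
      have hd : d * (p-1) = p := by rw [hdd]; field_simp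
      clear_value d
      have h2L : 2 * Real.log (p-1) + E^2 * d - 2 * E^2 = 0 := by linarith [hSig']
      have heq : 2 * Real.log (p-1) * (p-1) = E^2 * (p-2) := by
        linear_combination (p-1) * h2L - E^2 * hd
      have h1 : 2*(p-1) * (2*p-4) < 2*(p-1) * (Real.log (p-1) * p) :=
        mul_lt_mul_of_pos_left hlogp (by linarith)
      have h3 : E^2*p*(p-2) ≤ 4*(p-1)*(p-2) :=
        mul_le_mul_of_nonneg_right hE2le (by linarith)
      nlinarith [heq, h1, h3]
    exact ⟨key.le, fun _ => key⟩
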